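/- arXiv:2204.07870 — 2 statements merged into one kernel-verified Lean document; each statement's English description precedes it below -/
import Mathlib

section
/- Fix 1 < α < 2, let q₀(t) = log(e/t), ρ(s) = (1 + ((2−α)/(α−1)) ∫_s^1 dt/(t^{1/(α−1)} q₀(t)^{1/(α−1)}))^{(α−1)/(α−2)} for s ∈ (0,1], and f(z) = (z/|z|)·ρ(|z|) for z ∈ 𝔻\{0}, f(0) = 0. Then at every z ∈ 𝔻\{0} the mapping f is differentiable and ‖f′(z)‖ = |f_z| + |f_z̄| = (1 + ((2−α)/(α−1)) ∫_{|z|}^1 dt/(t^{1/(α−1)} q₀(t)^{1/(α−1)}))^{(α−1)/(α−2)} · 1/|z| = ρ(|z|)/|z|. -/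
/-!
STATEMENT 11: For `1 < α < 2` and the radial mapping `f(z) = (z/|z|)ρ(|z|)`, `f(0)=0`,
at every `z ∈ 𝔻 \ {0}` the map `f` is differentiable and
`‖f′(z)‖ = |f_z| + |f_z̄| = (1 + ((2-α)/(α-1))∫_{|z|}^1 dt/(t^{1/(α-1)} q₀(t)^{1/(α-1)}))^{(α-1)/(α-2)}/|z| = ρ(|z|)/|z|`.
-/

open MeasureTheory Set ENNReal

noncomputable section

/-- The kernel `t ↦ 1/(t^{1/(α-1)} (log(e/t))^{1/(α-1)})`. -/
def kern (α : ℝ) (t : ℝ) : ℝ :=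
  1 / (t ^ (1 / (α - 1)) * (Real.log (Real.exp 1 / t)) ^ (1 / (α - 1)))

/-- The radial profile `ρ`. -/
def rho (α : ℝ) (s : ℝ) : ℝ :=
  (1 + ((2 - α) / (α - 1)) * ∫ t in s..1, kern α t) ^ ((α - 1) / (α - 2))

/-- The radial mapping `f(z) = (z/|z|)·ρ(|z|)`, `f(0) = 0`. -/
def fmap (α : ℝ) (z : ℂ) : ℂ :=
  if z = 0 then 0 else (z / (‖z‖ : ℂ)) * (rho α ‖z‖ : ℂ)

/-- `f_z = (f_x - i f_y)/2`. -/
def wirtP (f : ℂ → ℂ) (z : ℂ) : ℂ :=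
  (fderiv ℝ f z 1 - Complex.I * fderiv ℝ f z Complex.I) / 2

/-- `f_z̄ = (f_x + i f_y)/2`. -/
def wirtM (f : ℂ → ℂ) (z : ℂ) : ℂ :=
  (fderiv ℝ f z 1 + Complex.I * fderiv ℝ f z Complex.I) / 2


lemma one_sub_log_pos {t : ℝ} (ht : t ∈ Ioo (0:ℝ) 2) : 0 < 1 - Real.log t := by
  have h1 : Real.log t < Real.log 2 := Real.log_lt_log ht.1 ht.2
  nlinarith [Real.log_two_lt_d9]

lemma wfun_pos {t : ℝ} (ht : t ∈ Ioo (0:ℝ) 2) : 0 < t * (1 - Real.log t) :=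
  mul_pos ht.1 (one_sub_log_pos ht)

lemma kern_eq (α : ℝ) {t : ℝ} (ht : t ∈ Ioo (0:ℝ) 2) :
    kern α t = (t * (1 - Real.log t)) ^ (-(1 / (α - 1))) := by
  have hL : Real.log (Real.exp 1 / t) = 1 - Real.log t := by
    rw [Real.log_div (Real.exp_ne_zero 1) ht.1.ne', Real.log_exp]
  rw [kern, hL, ← Real.mul_rpow ht.1.le (one_sub_log_pos ht).le,
    Real.rpow_neg (wfun_pos ht).le, one_div]

lemma kern_pos (α : ℝ) {t : ℝ} (ht : t ∈ Ioo (0:ℝ) 2) : 0 < kern α t := by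
  rw [kern_eq α ht]; exact Real.rpow_pos_of_pos (wfun_pos ht) _

lemma kern_contOn (α : ℝ) : ContinuousOn (kern α) (Ioo 0 2) := by
  have : ContinuousOn (fun t : ℝ => (t * (1 - Real.log t)) ^ (-(1 / (α - 1)))) (Ioo 0 2) := by
    apply ContinuousOn.rpow_const
    · exact continuousOn_id.mul (continuousOn_const.sub
        (Real.continuousOn_log.mono (fun x hx => ne_of_gt hx.1)))
    · exact fun t ht => Or.inl (wfun_pos ht).ne'
  exact this.congr (fun t ht => kern_eq α ht)

lemma hasDerivAt_wfun {u : ℝ} (hu : u ∈ Ioo (0:ℝ) 2) :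
    HasDerivAt (fun t : ℝ => t * (1 - Real.log t)) (-Real.log u) u := by
  have h := (hasDerivAt_id u).mul ((hasDerivAt_const u (1:ℝ)).sub (Real.hasDerivAt_log hu.1.ne'))
  refine h.congr_deriv (Eq.symm ?_)
  have : u ≠ 0 := (by exact (Set.mem_Ioo.mp hu).1.ne' : u ≠ 0)
  field_simp
  simp only [Pi.sub_apply, id]
  ring

lemma hasDerivAt_kern (α : ℝ) {u : ℝ} (hu : u ∈ Ioo (0:ℝ) 2) :
    HasDerivAt (kern α)
      (Real.log u * (1 / (α - 1)) * (u * (1 - Real.log u)) ^ (-(1 / (α - 1)) - 1)) u := by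
  have h := (hasDerivAt_wfun hu).rpow_const (p := -(1 / (α - 1))) (Or.inl (wfun_pos hu).ne')
  have heq : kern α =ᶠ[nhds u] fun t => (t * (1 - Real.log t)) ^ (-(1 / (α - 1))) :=
    Filter.eventuallyEq_of_mem (isOpen_Ioo.mem_nhds hu) (fun t ht => kern_eq α ht)
  have h2 : HasDerivAt (kern α) (-Real.log u * -(1 / (α - 1)) * (u * (1 - Real.log u)) ^ (-(1 / (α - 1)) - 1)) u :=
    HasDerivAt.congr_of_eventuallyEq h heq
  convert h2 using 1
  ring

lemma intervalIntegrable_kern (α : ℝ) {u : ℝ} (hu : u ∈ Ioo (0:ℝ) 2) :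
    IntervalIntegrable (kern α) volume u 1 := by
  apply ContinuousOn.intervalIntegrable
  apply (kern_contOn α).mono
  intro x hx
  rcases Set.mem_uIcc.mp hx with h | h
  · exact ⟨lt_of_lt_of_le hu.1 h.1, lt_of_le_of_lt h.2 one_lt_two⟩
  · exact ⟨lt_of_lt_of_le one_pos h.1, lt_of_le_of_lt h.2 hu.2⟩

lemma hasDerivAt_intkern (α : ℝ) {u : ℝ} (hu : u ∈ Ioo (0:ℝ) 2) :
    HasDerivAt (fun v => ∫ t in v..1, kern α t) (-(kern α u)) u :=
  intervalIntegral.integral_hasDerivAt_left (intervalIntegrable_kern α hu)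
    ((kern_contOn α).stronglyMeasurableAtFilter isOpen_Ioo u hu)
    ((kern_contOn α).continuousAt (isOpen_Ioo.mem_nhds hu))
lemma key_ineq (α : ℝ) (hα₁ : 1 < α) (hα₂ : α < 2) {s : ℝ} (hs : s ∈ Ioo (0:ℝ) 1) :
    s * kern α s < 1 + ((2 - α) / (α - 1)) * ∫ t in s..1, kern α t := by
  set c : ℝ := (2 - α) / (α - 1) with hc_def
  set γ : ℝ := 1 / (α - 1) with hγ_def
  have hα1 : (0:ℝ) < α - 1 := by linarith
  have hγ : 0 < γ := by positivity
  have hcγ : c + 1 = γ := by rw [hc_def, hγ_def]; field_simp; norm_num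
  set φ : ℝ → ℝ := fun u => 1 + c * (∫ t in u..1, kern α t) - u * kern α u with hφ_def
  have hmem : ∀ u : ℝ, u ∈ Icc s 1 → u ∈ Ioo (0:ℝ) 2 := fun u hu =>
    ⟨lt_of_lt_of_le hs.1 hu.1, lt_of_le_of_lt hu.2 one_lt_two⟩
  have hd : ∀ u ∈ Ioo (0:ℝ) 2,
      HasDerivAt φ (-(γ * u * (u * (1 - Real.log u)) ^ (-γ - 1))) u := by
    intro u hu
    have h1 := ((hasDerivAt_intkern α hu).const_mul c).const_add 1
    have h2 := (hasDerivAt_id u).mul (hasDerivAt_kern α hu)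
    have h := h1.sub h2
    refine h.congr_deriv (Eq.symm ?_)
    have hw := wfun_pos hu
    have hkk : kern α u = (u * (1 - Real.log u)) ^ (-γ - 1) * (u * (1 - Real.log u)) := by
      rw [kern_eq α hu, show -(1/(α-1)) = (-γ - 1) + 1 by rw [hγ_def]; ring,
        Real.rpow_add_one hw.ne']
      norm_num
    rw [hkk]
    have : c * -( (u * (1 - Real.log u)) ^ (-γ - 1) * (u * (1 - Real.log u)))
        - (1 * ((u * (1 - Real.log u)) ^ (-γ - 1) * (u * (1 - Real.log u)))
          + id u * (Real.log u * γ * (u * (1 - Real.log u)) ^ (-γ - 1)))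
        = -(((c + 1) * (u * (1 - Real.log u)) + γ * u * Real.log u)
            * (u * (1 - Real.log u)) ^ (-γ - 1)) := by
      simp only [id]
      ring
    rw [this, hcγ]
    ring_nf
  have hanti : StrictAntiOn φ (Icc s 1) := by
    apply strictAntiOn_of_deriv_neg (convex_Icc s 1)
    · intro u hu
      exact ((hd u (hmem u hu)).continuousAt).continuousWithinAt
    · intro u hu
      rw [interior_Icc] at hu
      have hu2 : u ∈ Ioo (0:ℝ) 2 := hmem u ⟨hu.1.le, hu.2.le⟩
      rw [(hd u hu2).deriv]
      have := wfun_pos hu2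
      have : (0:ℝ) < (u * (1 - Real.log u)) ^ (-γ - 1) := Real.rpow_pos_of_pos this _
      have hpos := mul_pos (mul_pos hγ hu2.1) this
      linarith
  have h10 : φ 1 = 0 := by
    have hk1 : kern α 1 = 1 := by
      simp [kern, Real.log_exp, Real.one_rpow]
    simp [hφ_def, hk1]
  have := hanti ⟨le_rfl, hs.2.le⟩ ⟨hs.2.le, le_rfl⟩ hs.2
  rw [h10] at this
  simp only [hφ_def] at this
  linarith

lemma integral_kern_nonneg (α : ℝ) {s : ℝ} (hs : s ∈ Ioo (0:ℝ) 1) :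
    0 ≤ ∫ t in s..1, kern α t := by
  apply intervalIntegral.integral_nonneg hs.2.le
  intro t ht
  exact (kern_pos α ⟨lt_of_lt_of_le hs.1 ht.1, lt_of_le_of_lt ht.2 one_lt_two⟩).le

lemma A_pos (α : ℝ) (hα₁ : 1 < α) (hα₂ : α < 2) {s : ℝ} (hs : s ∈ Ioo (0:ℝ) 1) :
    0 < 1 + ((2 - α) / (α - 1)) * ∫ t in s..1, kern α t := by
  have hc : 0 < (2 - α) / (α - 1) := by
    apply div_pos <;> linarith
  nlinarith [integral_kern_nonneg α hs]

lemma hasDerivAt_rho (α : ℝ) (hα₁ : 1 < α) (hα₂ : α < 2) {s : ℝ} (hs : s ∈ Ioo (0:ℝ) 1) :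
    HasDerivAt (rho α)
      ((1 + ((2 - α) / (α - 1)) * ∫ t in s..1, kern α t) ^ ((α - 1) / (α - 2) - 1)
        * kern α s) s := by
  have hs2 : s ∈ Ioo (0:ℝ) 2 := ⟨hs.1, lt_trans hs.2 one_lt_two⟩
  have hA : HasDerivAt (fun u => 1 + ((2 - α) / (α - 1)) * ∫ t in u..1, kern α t)
      (((2 - α) / (α - 1)) * -(kern α s)) s :=
    ((hasDerivAt_intkern α hs2).const_mul _).const_add 1
  have h := hA.rpow_const (p := (α - 1) / (α - 2)) (Or.inl (A_pos α hα₁ hα₂ hs).ne')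
  refine h.congr_deriv (Eq.symm ?_)
  have h1 : (α - 1) ≠ 0 := by linarith
  have h2 : (α - 2) ≠ 0 := by linarith
  have hbc : ((α - 1) / (α - 2)) * ((2 - α) / (α - 1)) = -1 := by
    field_simp
    ring
  set X := (1 + ((2 - α) / (α - 1)) * ∫ t in s..1, kern α t) ^ ((α - 1) / (α - 2) - 1)
  linear_combination (X * kern α s) * hbc

set_option maxHeartbeats 1000000 in
theorem fmap_norm_deriv
    (α : ℝ) (hα₁ : 1 < α) (hα₂ : α < 2)
    (z : ℂ) (hz : z ∈ Metric.ball (0:ℂ) 1) (hz0 : z ≠ 0) :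
    DifferentiableAt ℝ (fmap α) z ∧
      ‖wirtP (fmap α) z‖ + ‖wirtM (fmap α) z‖ =
        (1 + ((2 - α) / (α - 1)) * ∫ t in (‖z‖ : ℝ)..1, kern α t) ^ ((α - 1) / (α - 2))
          / ‖z‖ ∧
      ‖wirtP (fmap α) z‖ + ‖wirtM (fmap α) z‖ =
        rho α ‖z‖ / ‖z‖ := by
  have hs0 : 0 < ‖z‖ := norm_pos_iff.mpr hz0
  have hs1 : ‖z‖ < 1 := by simpa [Metric.mem_ball] using hz
  set s : ℝ := ‖z‖ with hs_def
  have hsI : s ∈ Ioo (0:ℝ) 1 := ⟨hs0, hs1⟩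
  have hs2I : s ∈ Ioo (0:ℝ) 2 := ⟨hs0, lt_trans hs1 one_lt_two⟩
  set A : ℝ := 1 + ((2 - α) / (α - 1)) * ∫ t in s..1, kern α t with hA_def
  set β : ℝ := (α - 1) / (α - 2) with hβ_def
  have hApos : 0 < A := A_pos α hα₁ hα₂ hsI
  have hρA : rho α s = A ^ β := rfl
  have hρpos : 0 < rho α s := by rw [hρA]; exact Real.rpow_pos_of_pos hApos _
  set d : ℝ := A ^ (β - 1) * kern α s with hd_def
  have hdρ : HasDerivAt (rho α) d s := hasDerivAt_rho α hα₁ hα₂ hsI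
  have hkpos : 0 < kern α s := kern_pos α hs2I
  have hXpos : 0 < A ^ (β - 1) := Real.rpow_pos_of_pos hApos _
  have hdpos : 0 < d := mul_pos hXpos hkpos
  have hkey : d * s < rho α s := by
    calc d * s = A ^ (β - 1) * (s * kern α s) := by rw [hd_def]; ring
    _ < A ^ (β - 1) * A :=
        mul_lt_mul_of_pos_left (key_ineq α hα₁ hα₂ hsI) hXpos
    _ = rho α s := by
        rw [hρA, show β = (β - 1) + 1 by ring, Real.rpow_add_one hApos.ne']
        norm_num
  -- derivative of G(u) = rho α u / u
  have hG0 : HasDerivAt (fun u => rho α u / u) ((d * s - rho α s * 1) / s ^ 2) s :=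
    hdρ.div (hasDerivAt_id s) hs0.ne'
  set g' : ℝ := (d * s - rho α s) / s ^ 2 with hg'_def
  have hG : HasDerivAt (fun u => rho α u / u) g' s := by
    convert hG0 using 1; rw [hg'_def]; ring
  -- derivative of the norm
  have hsq : HasFDerivAt (fun w : ℂ => ‖w‖ ^ 2) (2 • (innerSL ℝ z)) z :=
    (hasStrictFDerivAt_norm_sq z).hasFDerivAt
  have hsqrt : HasDerivAt Real.sqrt (1 / (2 * Real.sqrt (‖z‖ ^ 2))) (‖z‖ ^ 2) :=
    Real.hasDerivAt_sqrt (by positivity)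
  have hnorm0 : HasFDerivAt (fun w : ℂ => Real.sqrt (‖w‖ ^ 2))
      ((1 / (2 * Real.sqrt (‖z‖ ^ 2))) • (2 • (innerSL ℝ z))) z :=
    hsqrt.comp_hasFDerivAt z hsq
  set N : ℂ →L[ℝ] ℝ := (1 / (2 * Real.sqrt (‖z‖ ^ 2))) • (2 • (innerSL ℝ z)) with hN_def
  have hnorm : HasFDerivAt (fun w : ℂ => ‖w‖) N z :=
    hnorm0.congr_of_eventuallyEq
      (Filter.Eventually.of_forall (fun w => (Real.sqrt_sq (norm_nonneg w)).symm))
  have hGn : HasFDerivAt (fun w : ℂ => rho α ‖w‖ / ‖w‖) (g' • N) z :=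
    hG.comp_hasFDerivAt (f := fun w : ℂ => ‖w‖) z hnorm
  have hg : HasFDerivAt (fun w : ℂ => ((rho α ‖w‖ / ‖w‖ : ℝ) : ℂ))
      (Complex.ofRealCLM.comp (g' • N)) z :=
    (Complex.ofRealCLM.hasFDerivAt).comp z hGn
  set D : ℂ →L[ℝ] ℂ :=
    z • (Complex.ofRealCLM.comp (g' • N))
      + ((rho α s / s : ℝ) : ℂ) • (ContinuousLinearMap.id ℝ ℂ) with hD_def
  have hFd : HasFDerivAt (fun w : ℂ => w * ((rho α ‖w‖ / ‖w‖ : ℝ) : ℂ)) D z :=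
    (hasFDerivAt_id z).mul hg
  have hev : fmap α =ᶠ[nhds z] (fun w : ℂ => w * ((rho α ‖w‖ / ‖w‖ : ℝ) : ℂ)) := by
    have hmem : {w : ℂ | w ≠ 0} ∈ nhds z := isOpen_compl_singleton.mem_nhds hz0
    filter_upwards [hmem] with w hw
    have hnw : (‖w‖ : ℂ) ≠ 0 := by
      simpa using norm_ne_zero_iff.mpr hw
    rw [fmap, if_neg hw]
    push_cast
    field_simp
  have hF : HasFDerivAt (fmap α) D z := hFd.congr_of_eventuallyEq hev
  have hD1 : fderiv ℝ (fmap α) z 1 = z * ((g' * (z.re / s) : ℝ) : ℂ) + ((rho α s / s : ℝ) : ℂ) := by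
    rw [hF.fderiv, hD_def]
    simp only [ContinuousLinearMap.add_apply, ContinuousLinearMap.smul_apply,
      ContinuousLinearMap.coe_comp', Function.comp_apply, Complex.ofRealCLM_apply,
      ContinuousLinearMap.coe_id', id_eq, hN_def, innerSL_apply_apply]
    rw [Complex.inner]
    simp only [mul_one, Complex.conj_re, smul_eq_mul, Real.sqrt_sq hs0.le]
    push_cast
    simp only [one_mul, Complex.conj_re, Real.sqrt_sq (norm_nonneg z), Real.sqrt_sq hs0.le, ← hs_def]
    ring
  have hDI : fderiv ℝ (fmap α) z Complex.I
      = z * ((g' * (z.im / s) : ℝ) : ℂ) + ((rho α s / s : ℝ) : ℂ) * Complex.I := by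
    rw [hF.fderiv, hD_def]
    simp only [ContinuousLinearMap.add_apply, ContinuousLinearMap.smul_apply,
      ContinuousLinearMap.coe_comp', Function.comp_apply, Complex.ofRealCLM_apply,
      ContinuousLinearMap.coe_id', id_eq, hN_def, innerSL_apply_apply]
    rw [Complex.inner]
    simp only [Complex.conj_re, smul_eq_mul, Real.sqrt_sq hs0.le,
      Complex.mul_re, Complex.I_re, Complex.I_im, Complex.conj_im]
    push_cast
    simp only [Real.sqrt_sq (norm_nonneg z), Real.sqrt_sq hs0.le, ← hs_def]
    ring
  have hco : ((z.re : ℝ) : ℂ) - ((z.im : ℝ) : ℂ) * Complex.I = (starRingEnd ℂ) z := by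
    simp [Complex.ext_iff]
  have hzz : z * (starRingEnd ℂ) z = ((s : ℝ) : ℂ) ^ 2 := by
    rw [Complex.mul_conj]
    norm_cast
    rw [hs_def, Complex.normSq_eq_norm_sq]
  have hwP : wirtP (fmap α) z = (((s ^ 2 * g' + 2 * rho α s) / (2 * s) : ℝ) : ℂ) := by
    rw [wirtP, hD1, hDI]
    push_cast
    linear_combination (((g' : ℝ) : ℂ) * z / (2 * ((s : ℝ) : ℂ))) * hco
      + (((g' : ℝ) : ℂ) / (2 * ((s : ℝ) : ℂ))) * hzz
      - (((rho α s : ℝ) : ℂ) / (2 * ((s : ℝ) : ℂ))) * Complex.I_sq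
  have hwM : wirtM (fmap α) z = z ^ 2 * ((g' : ℝ) : ℂ) / (2 * ((s : ℝ) : ℂ)) := by
    rw [wirtM, hD1, hDI]
    push_cast
    linear_combination (z * ((g' : ℝ) : ℂ) / (2 * ((s : ℝ) : ℂ))) * (Complex.re_add_im z)
      + (((rho α s : ℝ) : ℂ) / (((s : ℝ) : ℂ) * 2)) * Complex.I_sq
  have hsg : s ^ 2 * g' = d * s - rho α s := by
    rw [hg'_def]; field_simp
  have habsP : ‖wirtP (fmap α) z‖ = (d * s + rho α s) / (2 * s) := by
    rw [hwP, Complex.norm_real, Real.norm_eq_abs, abs_of_pos, hsg]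
    · ring
    · rw [hsg]
      have h1 : 0 < d * s - rho α s + 2 * rho α s := by nlinarith
      positivity
  have habsM : ‖wirtM (fmap α) z‖ = (rho α s - d * s) / (2 * s) := by
    rw [hwM, show (2 * ((s : ℝ) : ℂ)) = ((2 * s : ℝ) : ℂ) by push_cast; ring]
    rw [norm_div, norm_mul, norm_pow, Complex.norm_real, Complex.norm_real, Real.norm_eq_abs, Real.norm_eq_abs]
    rw [show ‖z‖ = s from hs_def.symm]
    rw [abs_of_neg, abs_of_pos (by positivity : (0:ℝ) < 2 * s)]
    · rw [hg'_def]
      field_simp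
      ring
    · rw [hg'_def]
      apply div_neg_of_neg_of_pos
      · nlinarith
      · positivity
  have hsum : ‖wirtP (fmap α) z‖ + ‖wirtM (fmap α) z‖
      = rho α s / s := by
    rw [habsP, habsM, ← add_div,
      show d * s + rho α s + (rho α s - d * s) = 2 * rho α s by ring,
      mul_div_mul_left _ _ (two_ne_zero)]
  exact ⟨hF.differentiableAt, by rw [hsum, hρA], hsum⟩
end
end

section
/- Let D be a domain in ℂ, let f: D → ℂ be continuous, let z₀ ∈ closure(D), and let B_* denote the set of points z ∈ D at which f has a total differential with f′(z) = 0. Then for almost every r > 0 (with respect to linear Lebesgue measure), the 1-dimensional Hausdorff measure of f(B_* ∩ S(z₀,r) ∩ D) is zero, where S(z₀,r) = {z : |z−z₀| = r}. -/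
/-!
STATEMENT 18: Let `D ⊆ ℂ` be a domain, `f : D → ℂ` continuous, `z₀ ∈ closure D`,
and `B_*` the set of points `z ∈ D` at which `f` has a total differential with
`f′(z) = 0`.  Then for almost every `r > 0`, `H¹(f(B_* ∩ S(z₀,r) ∩ D)) = 0`.
-/

open MeasureTheory Set Metric ENNReal
open scoped NNReal

noncomputable section

lemma sphere_h1_ne_top' (z₀ : ℂ) (r : ℝ) : μH[1] (sphere z₀ r) ≠ ∞ := by
  rcases lt_or_ge r 0 with h | h
  · simp [sphere_eq_empty_of_neg h]
  · have himg : sphere z₀ r = circleMap z₀ r '' Ioc 0 (2 * Real.pi) := by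
      rw [image_circleMap_Ioc, abs_of_nonneg h]
    rw [himg]
    refine ne_top_of_le_ne_top ?_
      ((lipschitzWith_circleMap z₀ r).hausdorffMeasure_image_le (by norm_num) _)
    have hIoc : (μH[1] : Measure ℝ) (Ioc 0 (2 * Real.pi)) ≠ ∞ := by
      rw [MeasureTheory.hausdorffMeasure_real]
      simp [Real.volume_Ioc, ENNReal.mul_eq_top]
    exact ENNReal.mul_ne_top (by simp) hIoc


lemma image_null_of_zero_deriv (f : ℂ → ℂ) (s : Set ℂ) (hfin : μH[1] s ≠ ∞)
    (h : ∀ z ∈ s, HasFDerivWithinAt f (0 : ℂ →L[ℝ] ℂ) s z) :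
    μH[1] (f '' s) = 0 := by
  have key : ∀ ε : ℝ≥0, 0 < ε → μH[1] (f '' s) ≤ (ε : ℝ≥0∞) * μH[1] s := by
    intro ε hε
    set sn : ℕ → Set ℂ := fun n =>
      {z ∈ s | ∀ w ∈ s, dist w z < 1 / (n + 1) → dist (f w) (f z) ≤ ε * dist w z} with hsn
    have hmono : Monotone sn := by
      intro m n hmn z hz
      refine ⟨hz.1, fun w hw hd => hz.2 w hw (lt_of_lt_of_le hd ?_)⟩
      apply one_div_le_one_div_of_le (by positivity)
      have : (m : ℝ) ≤ n := Nat.cast_le.2 hmn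
      linarith
    have hcover : s = ⋃ n, sn n := by
      apply Subset.antisymm _ (iUnion_subset fun n => sep_subset _ _)
      intro z hz
      have hlo := (h z hz).isLittleO
      have hev := hlo.def (by exact_mod_cast hε : (0:ℝ) < (ε : ℝ))
      obtain ⟨δ, hδ, hδ'⟩ := Metric.mem_nhdsWithin_iff.1 hev
      obtain ⟨n, hn⟩ := exists_nat_one_div_lt hδ
      refine mem_iUnion.2 ⟨n, hz, fun w hw hd => ?_⟩
      have hw' : w ∈ Metric.ball z δ ∩ s := ⟨Metric.mem_ball.2 (lt_trans hd hn), hw⟩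
      have := hδ' hw'
      simpa [dist_eq_norm, sub_zero] using this
    have hbound : ∀ n, μH[1] (f '' sn n) ≤ (ε : ℝ≥0∞) * μH[1] s := by
      intro n
      set a : ℝ := 1 / (2 * (n + 1)) with ha
      have ha0 : 0 < a := by positivity
      set q : ℂ → ℤ × ℤ := fun z => (⌊z.re / a⌋, ⌊z.im / a⌋) with hq
      have hqm : Measurable q :=
        Measurable.prod (Int.measurable_floor.comp (by fun_prop))
          (Int.measurable_floor.comp (by fun_prop))
      set t : ℤ × ℤ → Set ℂ := fun p => sn n ∩ q ⁻¹' {p} with ht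
      have hcov : f '' sn n ⊆ ⋃ p, f '' t p := by
        rintro - ⟨z, hz, rfl⟩
        exact mem_iUnion.2 ⟨q z, mem_image_of_mem f ⟨hz, rfl⟩⟩
      have hlip : ∀ p, LipschitzOnWith ε f (t p) := by
        intro p
        rw [lipschitzOnWith_iff_dist_le_mul]
        rintro x ⟨hx, hx'⟩ y ⟨hy, hy'⟩
        have hpq : q x = q y := by
          rw [mem_preimage, mem_singleton_iff] at hx' hy'; rw [hx', hy']
        have hfl1 : ⌊x.re / a⌋ = ⌊y.re / a⌋ := congrArg Prod.fst hpq
        have hfl2 : ⌊x.im / a⌋ = ⌊y.im / a⌋ := congrArg Prod.snd hpq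
        have key : ∀ u v : ℝ, ⌊u / a⌋ = ⌊v / a⌋ → |u - v| < a := by
          intro u v huv
          have h1 : |u / a - v / a| < 1 := Int.abs_sub_lt_one_of_floor_eq_floor huv
          have h3 : u - v = (u / a - v / a) * a := by field_simp
          rw [h3, abs_mul, abs_of_pos ha0]
          simpa using mul_lt_mul_of_pos_right h1 ha0
        have hre := key _ _ hfl1
        have him := key _ _ hfl2
        have hdist : dist x y < 1 / (n + 1) := by
          have h1 : dist x y ≤ |(x - y).re| + |(x - y).im| := by
            rw [Complex.dist_eq]
            exact Complex.norm_le_abs_re_add_abs_im _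
          have : dist x y < a + a := by
            apply lt_of_le_of_lt h1
            simpa [Complex.sub_re, Complex.sub_im] using add_lt_add hre him
          have haa : a + a = 1 / (n + 1) := by
            rw [ha]
            have hn1 : ((n : ℝ) + 1) ≠ 0 := by positivity
            field_simp
            norm_num
          rwa [haa] at this
        exact hy.2 x hx.1 hdist
      set μ : Measure ℂ := μH[1] with hμ
      set T : Set ℂ := toMeasurable μ s with hT
      have hTm : MeasurableSet T := measurableSet_toMeasurable μ s
      have hsT : s ⊆ T := subset_toMeasurable μ s
      have hTμ : μ T = μ s := measure_toMeasurable s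
      have htsum : ∑' p, μ (t p) ≤ μ s := by
        have hle : ∀ p, μ (t p) ≤ μ (T ∩ q ⁻¹' {p}) := fun p =>
          measure_mono (inter_subset_inter ((sep_subset _ _).trans hsT) subset_rfl)
        calc ∑' p, μ (t p) ≤ ∑' p, μ (T ∩ q ⁻¹' {p}) := ENNReal.tsum_le_tsum hle
          _ = μ (⋃ p, T ∩ q ⁻¹' {p}) := by
              refine (measure_iUnion ?_ ?_).symm
              · intro p p' hpp'
                refine Disjoint.mono inter_subset_right inter_subset_right ?_
                simp only [disjoint_left]
                rintro z hz hz'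
                rw [mem_preimage, mem_singleton_iff] at hz hz'
                exact hpp' (hz ▸ hz'.symm ▸ rfl)
              · exact fun p => hTm.inter (hqm (measurableSet_singleton p))
          _ = μ T := by
              rw [← inter_iUnion]
              congr 1
              refine inter_eq_left.2 fun z _ => mem_iUnion.2 ⟨q z, rfl⟩
          _ = μ s := hTμ
      calc μH[1] (f '' sn n) ≤ μ (⋃ p, f '' t p) := measure_mono hcov
        _ ≤ ∑' p, μ (f '' t p) := measure_iUnion_le _
        _ ≤ ∑' p, (ε : ℝ≥0∞) * μ (t p) := by
            refine ENNReal.tsum_le_tsum fun p => ?_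
            simpa [ENNReal.rpow_one] using (hlip p).hausdorffMeasure_image_le zero_le_one
        _ = (ε : ℝ≥0∞) * ∑' p, μ (t p) := ENNReal.tsum_mul_left
        _ ≤ (ε : ℝ≥0∞) * μ s := mul_le_mul_right htsum _
    calc μH[1] (f '' s) = μH[1] (⋃ n, f '' sn n) := by rw [hcover, image_iUnion]
      _ = ⨆ n, μH[1] (f '' sn n) :=
          Directed.measure_iUnion fun m k =>
            ⟨max m k, image_mono (hmono (le_max_left m k)),
              image_mono (hmono (le_max_right m k))⟩
      _ ≤ (ε : ℝ≥0∞) * μH[1] s := iSup_le hbound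
  by_contra h0
  obtain ⟨n, hn, hlt⟩ := ENNReal.exists_nnreal_pos_mul_lt hfin h0
  exact absurd (key n hn) (not_le.2 hlt)

theorem hausdorff_image_null_on_circles_of_zero_differential
    (D : Set ℂ) (hD : IsOpen D) (hDconn : IsConnected D)
    (f : ℂ → ℂ) (hfc : ContinuousOn f D)
    (z₀ : ℂ) (hz₀ : z₀ ∈ closure D)
    (Bs : Set ℂ) (hBs : Bs = {z ∈ D | HasFDerivWithinAt f (0 : ℂ →L[ℝ] ℂ) D z}) :
    ∀ᵐ r ∂(volume.restrict (Ioi (0:ℝ))),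
      μH[1] (f '' (Bs ∩ sphere z₀ r ∩ D)) = 0 := by
  refine Filter.Eventually.of_forall fun r => ?_
  apply image_null_of_zero_deriv
  · exact ne_top_of_le_ne_top (sphere_h1_ne_top' z₀ r)
      (measure_mono fun z hz => hz.1.2)
  · intro z hz
    have hzB : z ∈ Bs := hz.1.1
    rw [hBs] at hzB
    exact hzB.2.mono fun w hw => hw.2
end
end
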